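/- For every real parameter α with 0 ≤ α ≤ 1/6 there exist constants C ≥ 1 and K ≥ 0 with the following property: for every m₀ there exist an integer m ≥ m₀, a finite set 𝒜 ⊂ ℝ with |𝒜| = m, and a simple graph G on vertex set 𝒜, such that the number of edges of G is at least m^{(8+2α)/5} / (C · (log m)^K) (note (8+2α)/5 = 2 − (2−2α)/5), and |𝒜 +_G 𝒜| + |𝒜 ·_G 𝒜| ≤ C · m^{(6+4α)/5} · (log m)^K (note (6+4α)/5 = 2 − (4−4α)/5). -/

import Mathlib

/-- The set of sums along the edges of a graph `G` on real numbers: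
`𝒜 +_G 𝒜 = {a + b : G.Adj a b}`. -/
def sumsAlong (G : SimpleGraph ℝ) : Set ℝ := {x | ∃ a b : ℝ, G.Adj a b ∧ x = a + b}

/-- The set of products along the edges of a graph `G` on real numbers:
`𝒜 ·_G 𝒜 = {a · b : G.Adj a b}`. -/
def prodsAlong (G : SimpleGraph ℝ) : Set ℝ := {x | ∃ a b : ℝ, G.Adj a b ∧ x = a * b}

namespace SPAE

open Finset

/-- Pool of primes `1 < q ≤ X`. -/
def QQ (X : ℕ) : Finset ℕ := (Finset.Ioc 1 X).filter Nat.Prime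

/-- Pool of primes `X < i ≤ n`. -/
def II (X n : ℕ) : Finset ℕ := (Finset.Ioc X n).filter Nat.Prime

/-- Vertex value `i * √(p/q)`. -/
noncomputable def vv (i p q : ℕ) : ℝ := (i : ℝ) * Real.sqrt ((p : ℝ) / (q : ℝ))

lemma mem_QQ {X q : ℕ} (h : q ∈ QQ X) : 1 < q ∧ q ≤ X ∧ q.Prime := by
  simp only [QQ, mem_filter, Finset.mem_Ioc] at h
  exact ⟨h.1.1, h.1.2, h.2⟩

lemma mem_II {X n i : ℕ} (h : i ∈ II X n) : X < i ∧ i ≤ n ∧ i.Prime := by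
  simp only [II, mem_filter, Finset.mem_Ioc] at h
  exact ⟨h.1.1, h.1.2, h.2⟩

lemma vv_inj {X n : ℕ} {i i' p q p' q' : ℕ} (hi : i ∈ II X n) (hi' : i' ∈ II X n)
    (hp : p ∈ QQ X) (hq : q ∈ QQ X) (hp' : p' ∈ QQ X) (hq' : q' ∈ QQ X)
    (hpq : p ≠ q) (hpq' : p' ≠ q') (h : vv i p q = vv i' p' q') :
    i = i' ∧ p = p' ∧ q = q' := by
  obtain ⟨hiX, _, hiP⟩ := mem_II hi
  obtain ⟨hi'X, _, hi'P⟩ := mem_II hi'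
  obtain ⟨_, hpX, hpP⟩ := mem_QQ hp
  obtain ⟨_, hqX, hqP⟩ := mem_QQ hq
  obtain ⟨_, hp'X, hp'P⟩ := mem_QQ hp'
  obtain ⟨_, hq'X, hq'P⟩ := mem_QQ hq'
  have hp0 : (0:ℝ) < p := by exact_mod_cast hpP.pos
  have hq0 : (0:ℝ) < q := by exact_mod_cast hqP.pos
  have hp'0 : (0:ℝ) < p' := by exact_mod_cast hp'P.pos
  have hq'0 : (0:ℝ) < q' := by exact_mod_cast hq'P.pos
  have hsq : ((i:ℝ) * Real.sqrt ((p:ℝ)/q))^2 = ((i':ℝ) * Real.sqrt ((p':ℝ)/q'))^2 := by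
    rw [show ((i:ℝ) * Real.sqrt ((p:ℝ)/q)) = vv i p q from rfl, h]; rfl
  rw [mul_pow, mul_pow, Real.sq_sqrt (by positivity), Real.sq_sqrt (by positivity)] at hsq
  have h3 : (i:ℝ)^2 * p * q' = (i':ℝ)^2 * p' * q := by
    field_simp at hsq
    linear_combination hsq
  have h4 : i^2 * p * q' = i'^2 * p' * q := by exact_mod_cast h3
  -- recover q = q'
  have hqq' : q = q' := by
    have hdvd : q ∣ i^2 * p * q' := by
      rw [h4]; exact dvd_mul_left q _
    rcases (Nat.Prime.dvd_mul hqP).mp hdvd with hd | hd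
    · rcases (Nat.Prime.dvd_mul hqP).mp hd with hd2 | hd2
      · exfalso
        have : q = i := (Nat.prime_dvd_prime_iff_eq hqP hiP).mp (hqP.dvd_of_dvd_pow hd2)
        omega
      · exact absurd ((Nat.prime_dvd_prime_iff_eq hqP hpP).mp hd2).symm hpq
    · exact (Nat.prime_dvd_prime_iff_eq hqP hq'P).mp hd
  subst hqq'
  have h5 : i^2 * p = i'^2 * p' := Nat.eq_of_mul_eq_mul_right hqP.pos h4
  have hpp' : p = p' := by
    have hdvd : p ∣ i'^2 * p' := by rw [← h5]; exact dvd_mul_left p _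
    rcases (Nat.Prime.dvd_mul hpP).mp hdvd with hd | hd
    · exfalso
      have : p = i' := (Nat.prime_dvd_prime_iff_eq hpP hi'P).mp (hpP.dvd_of_dvd_pow hd)
      omega
    · exact (Nat.prime_dvd_prime_iff_eq hpP hp'P).mp hd
  subst hpp'
  have h6 : i^2 = i'^2 := Nat.eq_of_mul_eq_mul_right hpP.pos h5
  exact ⟨Nat.pow_left_injective (by norm_num) h6, rfl, rfl⟩

lemma vv_add {i j p q : ℕ} (hp : 0 < p) (hq : 0 < q) :
    vv i p q + vv j q p = ((i*p + j*q : ℕ) : ℝ) / Real.sqrt ((p*q : ℕ)) := by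
  have hp0 : (0:ℝ) < p := by exact_mod_cast hp
  have hq0 : (0:ℝ) < q := by exact_mod_cast hq
  have hsp : (0:ℝ) < Real.sqrt p := Real.sqrt_pos.mpr hp0
  have hsq : (0:ℝ) < Real.sqrt q := Real.sqrt_pos.mpr hq0
  have h1 : Real.sqrt (((p*q : ℕ) : ℝ)) = Real.sqrt p * Real.sqrt q := by
    push_cast
    exact Real.sqrt_mul (le_of_lt hp0) _
  rw [h1, eq_div_iff (by positivity)]
  rw [vv, vv, Real.sqrt_div (le_of_lt hp0), Real.sqrt_div (le_of_lt hq0)]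
  push_cast
  nth_rewrite 3 [← Real.mul_self_sqrt (le_of_lt hp0)]
  nth_rewrite 3 [← Real.mul_self_sqrt (le_of_lt hq0)]
  field_simp
  rw [Real.sqrt_sq hsp.le, Real.sqrt_sq hsq.le]
  have hA := Real.mul_self_sqrt hp0.le
  have hB := Real.mul_self_sqrt hq0.le
  linear_combination (Real.sqrt p * Real.sqrt q * (i:ℝ)) * hA + (Real.sqrt p * Real.sqrt q * (j:ℝ)) * hB

lemma vv_mul {i j p q : ℕ} (hp : 0 < p) (hq : 0 < q) :
    vv i p q * vv j q p = ((i*j : ℕ) : ℝ) := by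
  have hp0 : (0:ℝ) < p := by exact_mod_cast hp
  have hq0 : (0:ℝ) < q := by exact_mod_cast hq
  have h1 : Real.sqrt ((p:ℝ)/q) * Real.sqrt ((q:ℝ)/p) = 1 := by
    rw [← Real.sqrt_mul (by positivity)]
    rw [show ((p:ℝ)/q) * ((q:ℝ)/p) = 1 by field_simp]
    exact Real.sqrt_one
  rw [vv, vv]
  push_cast
  calc (i:ℝ) * Real.sqrt ((p:ℝ)/q) * ((j:ℝ) * Real.sqrt ((q:ℝ)/p))
      = (i:ℝ) * (j:ℝ) * (Real.sqrt ((p:ℝ)/q) * Real.sqrt ((q:ℝ)/p)) := by ring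
    _ = (i:ℝ) * (j:ℝ) := by rw [h1, mul_one]

/-- The graph: edges `{i√(p/q), j√(q/p)}`. -/
def adjFun (X n : ℕ) (a b : ℝ) : Prop :=
  a ≠ b ∧ ∃ i j p q : ℕ, i ∈ II X n ∧ j ∈ II X n ∧ p ∈ QQ X ∧ q ∈ QQ X ∧ p ≠ q ∧
    a = vv i p q ∧ b = vv j q p

def GG (X n : ℕ) : SimpleGraph ℝ where
  Adj := adjFun X n
  symm := ⟨by
    rintro a b ⟨hab, i, j, p, q, hi, hj, hp, hq, hpq, ha, hb⟩
    exact ⟨hab.symm, j, i, q, p, hj, hi, hq, hp, hpq.symm, hb, ha⟩⟩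
  loopless := ⟨fun a h => h.1 rfl⟩

/-- The vertex set. -/
noncomputable def AA (X n : ℕ) : Finset ℝ :=
  ((II X n) ×ˢ (QQ X).offDiag).image (fun t => vv t.1 t.2.1 t.2.2)

lemma AA_injOn {X n : ℕ} : Set.InjOn (fun t : ℕ × ℕ × ℕ => vv t.1 t.2.1 t.2.2)
    ↑((II X n) ×ˢ (QQ X).offDiag) := by
  rintro ⟨i, p, q⟩ ht ⟨i', p', q'⟩ ht' h
  simp only [Finset.mem_coe, Finset.mem_product, Finset.mem_offDiag] at ht ht'
  obtain ⟨e1, e2, e3⟩ := vv_inj ht.1 ht'.1 ht.2.1 ht.2.2.1 ht'.2.1 ht'.2.2.1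
    ht.2.2.2 ht'.2.2.2 h
  simp [e1, e2, e3]

lemma AA_card {X n : ℕ} :
    (AA X n).card = (II X n).card * ((QQ X).card * (QQ X).card - (QQ X).card) := by
  rw [AA, Finset.card_image_of_injOn AA_injOn, Finset.card_product, Finset.offDiag_card]

lemma adj_mem {X n : ℕ} {a b : ℝ} (h : (GG X n).Adj a b) : a ∈ AA X n ∧ b ∈ AA X n := by
  obtain ⟨-, i, j, p, q, hi, hj, hp, hq, hpq, ha, hb⟩ := (h : adjFun X n a b)
  constructor
  · exact ha ▸ Finset.mem_image.mpr ⟨⟨i, p, q⟩,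
      Finset.mem_product.mpr ⟨hi, Finset.mem_offDiag.mpr ⟨hp, hq, hpq⟩⟩, rfl⟩
  · exact hb ▸ Finset.mem_image.mpr ⟨⟨j, q, p⟩,
      Finset.mem_product.mpr ⟨hj, Finset.mem_offDiag.mpr ⟨hq, hp, hpq.symm⟩⟩, rfl⟩

lemma edgeSet_finite {X n : ℕ} : (GG X n).edgeSet.Finite := by
  apply Set.Finite.subset (Set.Finite.image (fun t : ℝ × ℝ => s(t.1, t.2))
    (Set.Finite.prod (AA X n).finite_toSet (AA X n).finite_toSet))
  intro e he
  induction e with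
  | _ a b =>
    rw [SimpleGraph.mem_edgeSet] at he
    obtain ⟨ha, hb⟩ := adj_mem he
    exact ⟨(a, b), ⟨ha, hb⟩, rfl⟩

/-- pairs p < q from the pool -/
def halfPairs (X : ℕ) : Finset (ℕ × ℕ) := ((QQ X) ×ˢ (QQ X)).filter (fun pq => pq.1 < pq.2)

lemma halfPairs_card {X : ℕ} :
    2 * (halfPairs X).card = (QQ X).card * (QQ X).card - (QQ X).card := by
  have h1 : (QQ X).offDiag = halfPairs X ∪ ((QQ X ×ˢ QQ X).filter (fun pq => pq.2 < pq.1)) := by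
    ext pq
    simp only [Finset.mem_offDiag, halfPairs, Finset.mem_union, Finset.mem_filter,
      Finset.mem_product]
    constructor
    · rintro ⟨hp, hq, hne⟩
      rcases lt_or_gt_of_ne hne with h | h
      · exact Or.inl ⟨⟨hp, hq⟩, h⟩
      · exact Or.inr ⟨⟨hp, hq⟩, h⟩
    · rintro (⟨⟨hp, hq⟩, h⟩ | ⟨⟨hp, hq⟩, h⟩)
      · exact ⟨hp, hq, ne_of_lt h⟩
      · exact ⟨hp, hq, ne_of_gt h⟩
  have h2 : Disjoint (halfPairs X) ((QQ X ×ˢ QQ X).filter (fun pq => pq.2 < pq.1)) := by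
    rw [Finset.disjoint_left]
    intro pq h h'
    simp only [halfPairs, Finset.mem_filter] at h h'
    omega
  have h3 : ((QQ X ×ˢ QQ X).filter (fun pq => pq.2 < pq.1)).card = (halfPairs X).card := by
    apply Finset.card_bij (fun pq _ => Prod.swap pq)
    · intro pq h
      simp only [halfPairs, Finset.mem_filter, Finset.mem_product] at h ⊢
      exact ⟨⟨h.1.2, h.1.1⟩, h.2⟩
    · intro pq h pq' h' hh
      exact Prod.swap_injective hh
    · intro pq h
      simp only [halfPairs, Finset.mem_filter, Finset.mem_product] at h ⊢
      exact ⟨pq.swap, ⟨⟨h.1.2, h.1.1⟩, h.2⟩, rfl⟩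
  rw [← Finset.offDiag_card, h1, Finset.card_union_of_disjoint h2, h3]
  ring

lemma edge_lower {X n : ℕ} :
    (II X n).card * (II X n).card * (halfPairs X).card ≤ (GG X n).edgeSet.ncard := by
  classical
  set dom : Finset ((ℕ × ℕ) × ℕ × ℕ) := ((II X n) ×ˢ (II X n)) ×ˢ halfPairs X with hdom
  set F : ((ℕ × ℕ) × ℕ × ℕ) → Sym2 ℝ :=
    fun t => s(vv t.1.1 t.2.1 t.2.2, vv t.1.2 t.2.2 t.2.1) with hF
  have hmemd : ∀ t ∈ dom, t.1.1 ∈ II X n ∧ t.1.2 ∈ II X n ∧ t.2.1 ∈ QQ X ∧ t.2.2 ∈ QQ X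
      ∧ t.2.1 < t.2.2 := by
    intro t ht
    simp only [hdom, halfPairs, Finset.mem_product, Finset.mem_filter] at ht
    exact ⟨ht.1.1, ht.1.2, ht.2.1.1, ht.2.1.2, ht.2.2⟩
  have hsub : ↑(dom.image F) ⊆ (GG X n).edgeSet := by
    intro e he
    simp only [Finset.coe_image, Set.mem_image, Finset.mem_coe] at he
    obtain ⟨t, ht, rfl⟩ := he
    obtain ⟨h1, h2, h3, h4, h5⟩ := hmemd t ht
    rw [hF, SimpleGraph.mem_edgeSet]
    show adjFun X n _ _
    refine ⟨?_, t.1.1, t.1.2, t.2.1, t.2.2, h1, h2, h3, h4, ne_of_lt h5, rfl, rfl⟩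
    intro hcon
    obtain ⟨-, e2, e3⟩ := vv_inj h1 h2 h3 h4 h4 h3 (ne_of_lt h5) (ne_of_gt h5) hcon
    omega
  have hinj : Set.InjOn F dom := by
    rintro ⟨⟨i, j⟩, p, q⟩ ht ⟨⟨i', j'⟩, p', q'⟩ ht' hFF
    obtain ⟨h1, h2, h3, h4, h5⟩ := hmemd _ (by exact_mod_cast ht)
    obtain ⟨h1', h2', h3', h4', h5'⟩ := hmemd _ (by exact_mod_cast ht')
    simp only [hF, Sym2.eq_iff] at hFF
    rcases hFF with ⟨ha, hb⟩ | ⟨ha, hb⟩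
    · obtain ⟨e1, e2, e3⟩ := vv_inj h1 h1' h3 h4 h3' h4' (ne_of_lt h5) (ne_of_lt h5') ha
      obtain ⟨e4, -, -⟩ := vv_inj h2 h2' h4 h3 h4' h3' (ne_of_gt h5) (ne_of_gt h5') hb
      exact Prod.ext (Prod.ext e1 e4) (Prod.ext e2 e3)
    · exfalso
      obtain ⟨-, e2, e3⟩ := vv_inj h1 h2' h3 h4 h4' h3' (ne_of_lt h5) (ne_of_gt h5') ha
      omega
  calc (II X n).card * (II X n).card * (halfPairs X).card
      = dom.card := by rw [hdom, Finset.card_product, Finset.card_product]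
    _ = (dom.image F).card := (Finset.card_image_of_injOn hinj).symm
    _ = (↑(dom.image F) : Set (Sym2 ℝ)).ncard := (Set.ncard_coe_finset _).symm
    _ ≤ (GG X n).edgeSet.ncard := Set.ncard_le_ncard hsub edgeSet_finite

lemma sums_upper {X n : ℕ} :
    (sumsAlong (GG X n)).ncard ≤ (n*X+n*X+1) * ((QQ X).card * (QQ X).card) := by
  classical
  set T : Finset (ℕ × ℕ × ℕ) := (Finset.range (n*X+n*X+1)) ×ˢ ((QQ X) ×ˢ (QQ X)) with hT
  set g : ℕ × ℕ × ℕ → ℝ := fun t => (t.1 : ℝ) / Real.sqrt ((t.2.1 * t.2.2 : ℕ)) with hg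
  have hsub : sumsAlong (GG X n) ⊆ g '' ↑T := by
    rintro x ⟨a, b, hadj, rfl⟩
    obtain ⟨-, i, j, p, q, hi, hj, hp, hq, hpq, rfl, rfl⟩ := (hadj : adjFun X n a b)
    obtain ⟨hiX, hin, -⟩ := mem_II hi
    obtain ⟨hjX, hjn, -⟩ := mem_II hj
    obtain ⟨-, hpX, hpP⟩ := mem_QQ hp
    obtain ⟨-, hqX, hqP⟩ := mem_QQ hq
    refine ⟨⟨i*p + j*q, p, q⟩, ?_, ?_⟩
    · simp only [hT, Finset.coe_product, Set.mem_prod, Finset.mem_coe, Finset.mem_range]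
      refine ⟨?_, hp, hq⟩
      have : i*p + j*q ≤ n*X + n*X := by
        have := Nat.mul_le_mul hin hpX
        have := Nat.mul_le_mul hjn hqX
        omega
      omega
    · rw [hg]
      exact (vv_add hpP.pos hqP.pos).symm
  calc (sumsAlong (GG X n)).ncard ≤ (g '' ↑T).ncard :=
        Set.ncard_le_ncard hsub (Set.Finite.image _ T.finite_toSet)
    _ ≤ (↑T : Set (ℕ × ℕ × ℕ)).ncard := Set.ncard_image_le T.finite_toSet
    _ = T.card := Set.ncard_coe_finset _
    _ = (n*X+n*X+1) * ((QQ X).card * (QQ X).card) := by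
        rw [hT, Finset.card_product, Finset.card_product, Finset.card_range]

lemma prods_upper {X n : ℕ} :
    (prodsAlong (GG X n)).ncard ≤ n*n + 1 := by
  classical
  set T : Finset ℕ := Finset.range (n*n+1) with hT
  have hsub : prodsAlong (GG X n) ⊆ (fun N : ℕ => (N : ℝ)) '' ↑T := by
    rintro x ⟨a, b, hadj, rfl⟩
    obtain ⟨-, i, j, p, q, hi, hj, hp, hq, hpq, rfl, rfl⟩ := (hadj : adjFun X n a b)
    obtain ⟨-, hin, -⟩ := mem_II hi
    obtain ⟨-, hjn, -⟩ := mem_II hj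
    obtain ⟨-, -, hpP⟩ := mem_QQ hp
    obtain ⟨-, -, hqP⟩ := mem_QQ hq
    refine ⟨i*j, ?_, (vv_mul hpP.pos hqP.pos).symm⟩
    simp only [hT, Finset.mem_coe, Finset.mem_range]
    have := Nat.mul_le_mul hin hjn
    omega
  calc (prodsAlong (GG X n)).ncard ≤ ((fun N : ℕ => (N : ℝ)) '' ↑T).ncard :=
        Set.ncard_le_ncard hsub (Set.Finite.image _ T.finite_toSet)
    _ ≤ (↑T : Set ℕ).ncard := Set.ncard_image_le T.finite_toSet
    _ = T.card := Set.ncard_coe_finset _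
    _ = n*n + 1 := by rw [hT, Finset.card_range]

lemma centralBinom_le_pow (k : ℕ) (hk : 0 < k) :
    Nat.centralBinom k ≤ (2*k) ^ (((Finset.Ioc 1 (2*k)).filter Nat.Prime).card) := by
  classical
  set cb := Nat.centralBinom k with hcbdef
  have hcb : cb ≠ 0 := (Nat.centralBinom_pos k).ne'
  have h2k1 : 1 ≤ 2*k := by omega
  have hfac : ∀ p : ℕ, p ^ cb.factorization p ≤ 2*k := by
    intro p
    rw [hcbdef, Nat.centralBinom]
    exact Nat.pow_factorization_choose_le (by omega)
  have hsub : cb.primeFactors ⊆ (Finset.Ioc 1 (2*k)).filter Nat.Prime := by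
    intro p hp
    have hpP : p.Prime := Nat.prime_of_mem_primeFactors hp
    have hν : 0 < cb.factorization p :=
      Nat.Prime.factorization_pos_of_dvd hpP hcb (Nat.dvd_of_mem_primeFactors hp)
    have hple : p ≤ 2*k := by
      calc p = p ^ 1 := (pow_one p).symm
        _ ≤ p ^ cb.factorization p := Nat.pow_le_pow_right hpP.pos hν
        _ ≤ 2*k := hfac p
    simp only [Finset.mem_filter, Finset.mem_Ioc]
    exact ⟨⟨hpP.one_lt, hple⟩, hpP⟩
  calc cb = ∏ p ∈ cb.primeFactors, p ^ cb.factorization p :=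
        (Nat.factorization_prod_pow_eq_self hcb).symm
    _ ≤ ∏ _p ∈ cb.primeFactors, 2*k := Finset.prod_le_prod' (fun p _ => hfac p)
    _ = (2*k) ^ cb.primeFactors.card := Finset.prod_const _
    _ ≤ (2*k) ^ (((Finset.Ioc 1 (2*k)).filter Nat.Prime).card) :=
        Nat.pow_le_pow_right h2k1 (Finset.card_le_card hsub)

/-- helper: log x ≤ 2√x for x ≥ 1 -/
lemma log_le_two_sqrt {x : ℝ} (hx : 1 ≤ x) : Real.log x ≤ 2 * Real.sqrt x := by
  have h0 : (0:ℝ) < x := lt_of_lt_of_le one_pos hx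
  have hs : (0:ℝ) < Real.sqrt x := Real.sqrt_pos.mpr h0
  have h1 : Real.log x = 2 * Real.log (Real.sqrt x) := by
    rw [Real.log_sqrt h0.le]; ring
  rw [h1]
  have := Real.log_le_sub_one_of_pos hs
  nlinarith

/-- Chebyshev-type lower bound for the prime counting function. -/
lemma primes_lower {N : ℕ} (hN : 2^30 ≤ N) :
    (N : ℝ) / (4 * Real.log N) ≤ (((Finset.Ioc 1 N).filter Nat.Prime).card : ℝ) := by
  classical
  set k := N / 2 with hk
  have hk4 : 4 ≤ k := by omega
  have h2kN : 2*k ≤ N := by omega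
  have hN2k : N ≤ 2*k + 1 := by omega
  set c := (((Finset.Ioc 1 (2*k)).filter Nat.Prime).card) with hc
  have hmono : c ≤ ((Finset.Ioc 1 N).filter Nat.Prime).card :=
    Finset.card_le_card (Finset.filter_subset_filter _ (Finset.Ioc_subset_Ioc_right h2kN))
  have key : (4:ℕ)^k ≤ (2*k)^(c+1) := by
    calc (4:ℕ)^k ≤ k * Nat.centralBinom k := (Nat.four_pow_lt_mul_centralBinom k hk4).le
      _ ≤ (2*k) * (2*k)^c :=
          Nat.mul_le_mul (by omega) (centralBinom_le_pow k (by omega))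
      _ = (2*k)^(c+1) := by rw [pow_succ]; ring
  -- pass to real logarithms
  have h2k0 : (0:ℝ) < ((2*k : ℕ) : ℝ) := by
    have : 0 < 2*k := by omega
    exact_mod_cast this
  have h1 : ((4:ℝ))^(k:ℕ) ≤ (((2*k:ℕ)):ℝ)^(c+1) := by exact_mod_cast key
  have h2 : Real.log ((4:ℝ)^(k:ℕ)) ≤ Real.log ((((2*k:ℕ)):ℝ)^(c+1)) :=
    Real.log_le_log (by positivity) h1
  rw [Real.log_pow, Real.log_pow] at h2
  push_cast at h2
  have hl2 : (0.6931471803:ℝ) < Real.log 2 := Real.log_two_gt_d9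
  have hl4 : Real.log (4:ℝ) = 2 * Real.log 2 := by
    rw [show (4:ℝ) = 2^2 by norm_num, Real.log_pow]
    push_cast; ring
  have hNR : ((2:ℝ))^(30:ℕ) ≤ (N:ℝ) := by exact_mod_cast hN
  have hN0 : (0:ℝ) < (N:ℝ) := by
    have : 0 < N := by omega
    exact_mod_cast this
  have h1N : (1:ℝ) ≤ (N:ℝ) := by nlinarith
  have hlogN1 : 1 ≤ Real.log N := by
    rw [Real.le_log_iff_exp_le hN0]
    calc Real.exp 1 ≤ 2.7182818286 := (Real.exp_one_lt_d9).le
      _ ≤ (N:ℝ) := by nlinarith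
  have hlog2kN : Real.log (((2*k:ℕ)):ℝ) ≤ Real.log N := by
    apply Real.log_le_log h2k0
    exact_mod_cast h2kN
  have hkR : ((N:ℝ) - 1)/2 ≤ (k:ℝ) := by
    have : (N:ℝ) ≤ 2*(k:ℝ) + 1 := by exact_mod_cast hN2k
    linarith
  have h14 : (2:ℝ)^(14:ℕ) ≤ Real.sqrt N := by
    rw [show ((2:ℝ)^(14:ℕ)) = Real.sqrt ((2^(14:ℕ))^2) by
      rw [Real.sqrt_sq (by positivity)]]
    apply Real.sqrt_le_sqrt
    nlinarith
  have hsx : Real.sqrt N ≤ (N:ℝ)/2^14 := by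
    rw [show Real.sqrt (N:ℝ) = (N:ℝ) / Real.sqrt N from (Real.div_sqrt).symm]
    apply div_le_div_of_nonneg_left hN0.le (by positivity) h14
  have hlogN_le : Real.log N ≤ 2*((N:ℝ)/2^14) :=
    le_trans (log_le_two_sqrt h1N) (by linarith [hsx])
  have hcard : ((c:ℝ)) ≤ (((Finset.Ioc 1 N).filter Nat.Prime).card : ℝ) := by
    exact_mod_cast hmono
  have hfin : (N:ℝ)/(4*Real.log N) ≤ (c:ℝ) := by
    rw [div_le_iff₀ (by positivity)]
    push_cast at hlog2kN
    have s1 : (k:ℝ) * Real.log 4 ≤ ((c:ℝ)+1) * Real.log N := by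
      calc (k:ℝ) * Real.log 4 ≤ ((c:ℝ)+1) * Real.log (2*(k:ℝ)) := h2
        _ ≤ ((c:ℝ)+1) * Real.log N := by
            apply mul_le_mul_of_nonneg_left hlog2kN (by positivity)
    rw [hl4] at s1
    nlinarith [s1, hkR, hl2, hlogN_le, hNR, hlogN1, hN0]
  linarith

end SPAE

open SPAE

/-- Theorem 1 of the paper: for every `0 ≤ α ≤ 1/6` there are, for arbitrarily
large `m`, a set `𝒜` of `m` reals and a graph `G` on `𝒜` with
`Ω̃(m^{(8+2α)/5})` edges such that `|𝒜 +_G 𝒜| + |𝒜 ·_G 𝒜| = Õ(m^{(6+4α)/5})`. -/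
theorem sum_product_along_edges_reals (α : ℝ) (hα0 : 0 ≤ α) (hα1 : α ≤ 1/6) :
    ∃ C K : ℝ, 1 ≤ C ∧ 0 ≤ K ∧ ∀ m₀ : ℕ, ∃ m : ℕ, m₀ ≤ m ∧
      ∃ (𝒜 : Finset ℝ) (G : SimpleGraph ℝ),
        𝒜.card = m ∧
        (∀ a b : ℝ, G.Adj a b → a ∈ 𝒜 ∧ b ∈ 𝒜) ∧
        (m : ℝ) ^ ((8 + 2*α)/5) / (C * (Real.log m) ^ K) ≤ (G.edgeSet.ncard : ℝ) ∧
        ((sumsAlong G).ncard + (prodsAlong G).ncard : ℝ) ≤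
          C * (m : ℝ) ^ ((6 + 4*α)/5) * (Real.log m) ^ K := by
  classical
  have hα1' : α < 1 := by linarith
  have h1α : (0:ℝ) < 1 - α := by linarith
  refine ⟨2^30, 6, by norm_num, by norm_num, ?_⟩
  intro m₀
  set θ : ℝ := (3 + 2*α)/(1 - α) with hθdef
  have hθ3 : 3 ≤ θ := by rw [hθdef, le_div_iff₀ h1α]; linarith
  have hθ4 : θ ≤ 4 := by rw [hθdef, div_le_iff₀ h1α]; linarith
  have hexp1 : (θ + 2) * ((3 + 2*α)/5) = θ := by
    rw [hθdef]; field_simp; ring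
  have hexp2 : (θ + 2) * ((6 + 4*α)/5) = 2*θ := by
    rw [hθdef]; field_simp; ring
  obtain ⟨X, hXm₀, hX30⟩ : ∃ X : ℕ, m₀ ≤ X ∧ 2^30 ≤ X :=
    ⟨max m₀ (2^30), le_max_left _ _, le_max_right _ _⟩
  set RX : ℝ := (X:ℝ) with hRXdef
  have hRX30 : (2:ℝ)^(30:ℕ) ≤ RX := by rw [hRXdef]; exact_mod_cast hX30
  have hRX1 : (1:ℝ) ≤ RX := by
    have h : (1:ℝ) ≤ (2:ℝ)^(30:ℕ) := by norm_num
    linarith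
  have hRX0 : (0:ℝ) < RX := lt_of_lt_of_le one_pos hRX1
  have hrp0 : (0:ℝ) ≤ RX^θ := Real.rpow_nonneg hRX0.le _
  have hrp1 : (1:ℝ) ≤ RX^θ := Real.one_le_rpow hRX1 (by linarith)
  obtain ⟨n, hn_lb, hn_ub⟩ : ∃ n : ℕ, RX^θ ≤ (n:ℝ) ∧ (n:ℝ) ≤ 2*RX^θ := by
    refine ⟨⌈RX^θ⌉₊, Nat.le_ceil _, ?_⟩
    have := Nat.ceil_lt_add_one hrp0
    linarith
  set RN : ℝ := (n:ℝ) with hRNdef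
  have hX3R : RX^(3:ℕ) ≤ RX^θ := by
    rw [← Real.rpow_natCast RX 3]
    exact Real.rpow_le_rpow_of_exponent_le hRX1 (by push_cast; linarith)
  have hX4R : RX^θ ≤ RX^(4:ℕ) := by
    rw [← Real.rpow_natCast RX 4]
    exact Real.rpow_le_rpow_of_exponent_le hRX1 (by push_cast; linarith)
  have hX3n : X^3 ≤ n := by
    have h : ((X^3 : ℕ) : ℝ) ≤ RN := by
      push_cast
      calc (X:ℝ)^3 ≤ RX^θ := by
            rw [hRXdef] at hX3R ⊢
            exact hX3R
        _ ≤ RN := hn_lb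
    rw [hRNdef] at h
    exact_mod_cast h
  have hXn : X ≤ n := le_trans (Nat.le_self_pow (by norm_num) X) hX3n
  have hn30 : 2^30 ≤ n := le_trans hX30 hXn
  have hRXRN : RX ≤ RN := by rw [hRXdef, hRNdef]; exact_mod_cast hXn
  have hRN0 : (0:ℝ) < RN := lt_of_lt_of_le hRX0 hRXRN
  have hRN1' : (1:ℝ) ≤ RN := le_trans hRX1 hRXRN
  have hRX3RN : RX*RX*RX ≤ RN := by
    have h5 : RX^(3:ℕ) = RX*RX*RX := by ring
    calc RX*RX*RX = RX^(3:ℕ) := h5.symm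
      _ ≤ RX^θ := hX3R
      _ ≤ RN := hn_lb
  -- pools
  obtain ⟨Z, hZdef⟩ : ∃ z : ℕ, z = (QQ X).card := ⟨_, rfl⟩
  obtain ⟨N1, hN1def⟩ : ∃ z : ℕ, z = (II X n).card := ⟨_, rfl⟩
  set RZ : ℝ := (Z:ℝ) with hRZdef
  set RN1 : ℝ := (N1:ℝ) with hRN1def
  have hZX : Z ≤ X := by
    rw [hZdef]
    calc (QQ X).card ≤ (Finset.Ioc 1 X).card := Finset.card_filter_le _ _
      _ = X - 1 := Nat.card_Ioc 1 X
      _ ≤ X := by omega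
  have hRZX : RZ ≤ RX := by rw [hRZdef, hRXdef]; exact_mod_cast hZX
  have hRZ0 : (0:ℝ) ≤ RZ := by rw [hRZdef]; positivity
  have hRN10 : (0:ℝ) ≤ RN1 := by rw [hRN1def]; positivity
  -- logs and sqrt
  set L : ℝ := Real.log RX with hLdef
  set Ln : ℝ := Real.log RN with hLndef
  set s : ℝ := Real.sqrt RX with hsdef
  have hss : s * s = RX := Real.mul_self_sqrt hRX0.le
  have hs0 : (0:ℝ) < s := Real.sqrt_pos.mpr hRX0
  have hs15 : (32768:ℝ) ≤ s := by
    rw [hsdef, show (32768:ℝ) = Real.sqrt (32768^2) by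
      rw [Real.sqrt_sq (by norm_num)]]
    apply Real.sqrt_le_sqrt
    calc ((32768:ℝ))^2 = (2:ℝ)^(30:ℕ) := by norm_num
      _ ≤ RX := hRX30
  have hL1 : 1 ≤ L := by
    rw [hLdef, Real.le_log_iff_exp_le hRX0]
    calc Real.exp 1 ≤ 2.7182818286 := (Real.exp_one_lt_d9).le
      _ ≤ (2:ℝ)^(30:ℕ) := by norm_num
      _ ≤ RX := hRX30
  have hLn1 : 1 ≤ Ln := by
    rw [hLndef, Real.le_log_iff_exp_le hRN0]
    calc Real.exp 1 ≤ 2.7182818286 := (Real.exp_one_lt_d9).le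
      _ ≤ (2:ℝ)^(30:ℕ) := by norm_num
      _ ≤ RX := hRX30
      _ ≤ RN := hRXRN
  have hL0 : (0:ℝ) ≤ L := by linarith
  have hLn0 : (0:ℝ) ≤ Ln := by linarith
  have hL2s : L ≤ 2*s := by rw [hLdef, hsdef]; exact log_le_two_sqrt hRX1
  have hLn5L : Ln ≤ 5*L := by
    have h1 : RN ≤ 2*RX^(4:ℕ) := by linarith only [hn_ub, hX4R]
    have h2 : Ln ≤ Real.log (2*RX^(4:ℕ)) := by
      rw [hLndef]
      exact Real.log_le_log hRN0 h1
    have h3 : Real.log (2*RX^(4:ℕ)) = Real.log 2 + 4*L := by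
      rw [Real.log_mul (by norm_num) (by positivity), Real.log_pow, hLdef]
      push_cast; ring
    have h4 : Real.log 2 ≤ 1 := by
      have := Real.log_le_sub_one_of_pos (show (0:ℝ) < 2 by norm_num)
      linarith
    linarith only [h2, h3, h4, hL1]
  have hLn10s : Ln ≤ 10*s := by linarith only [hLn5L, hL2s, hL1]
  -- Chebyshev
  have hZ_lb : RX/(4*L) ≤ RZ := by
    rw [hRZdef, hZdef, hLdef, hRXdef]
    exact primes_lower hX30
  have hZD : RX ≤ RZ*(4*L) :=
    (div_le_iff₀ (by linarith only [hL1] : (0:ℝ) < 4*L)).mp hZ_lb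
  obtain ⟨Pn, hPndef⟩ : ∃ z : ℕ, z = ((Finset.Ioc 1 n).filter Nat.Prime).card := ⟨_, rfl⟩
  have hsplitZ : N1 + Z = Pn := by
    rw [hPndef]
    have hU : Finset.Ioc 1 X ∪ Finset.Ioc X n = Finset.Ioc 1 n :=
      Finset.Ioc_union_Ioc_eq_Ioc (by omega) hXn
    have heq : ((Finset.Ioc 1 n).filter Nat.Prime)
        = ((Finset.Ioc 1 X).filter Nat.Prime) ∪ ((Finset.Ioc X n).filter Nat.Prime) := by
      rw [← Finset.filter_union, hU]
    have hD : Disjoint ((Finset.Ioc 1 X).filter Nat.Prime)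
        ((Finset.Ioc X n).filter Nat.Prime) := by
      rw [Finset.disjoint_left]
      intro a ha hb
      simp only [Finset.mem_filter, Finset.mem_Ioc] at ha hb
      omega
    rw [heq, Finset.card_union_of_disjoint hD, hZdef, hN1def, QQ, II]
    omega
  have hPn : RN/(4*Ln) ≤ (Pn : ℝ) := by
    rw [hLndef, hRNdef, hPndef]
    exact primes_lower hn30
  have hLnRX : 8*Ln*RX ≤ RN := by
    have h1 : 8*Ln*RX ≤ 80*s*RX := by
      have h := mul_le_mul_of_nonneg_right
        (show 8*Ln ≤ 80*s by linarith only [hLn10s]) hRX0.le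
      calc 8*Ln*RX = 8*Ln*RX := rfl
        _ ≤ 80*s*RX := by linarith only [h]
    have h2 : 80*s*RX ≤ RX*RX*RX := by
      have e1 : (0:ℝ) ≤ s - 80 := by linarith only [hs15]
      have e2 : (0:ℝ) ≤ s*RX := by positivity
      have e3 := mul_nonneg e1 e2
      have e4 : s*(s*RX) = RX*RX := by
        rw [show s*(s*RX) = (s*s)*RX by ring, hss]
      nlinarith only [e3, e4, hRX0, hs0]
    linarith only [h1, h2, hRX3RN]
  have hN1_lb : RN/(8*Ln) ≤ RN1 := by
    have hcast : RN1 + RZ = (Pn : ℝ) := by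
      rw [hRN1def, hRZdef]
      exact_mod_cast congrArg (fun t : ℕ => (t:ℝ)) hsplitZ
    have hval : RX ≤ RN/(8*Ln) := by
      rw [le_div_iff₀ (by linarith only [hLn1] : (0:ℝ) < 8*Ln)]
      linarith only [hLnRX]
    have hhalf : RN/(4*Ln) = RN/(8*Ln) + RN/(8*Ln) := by
      have hLnne : Ln ≠ 0 := by linarith only [hLn1]
      field_simp
      ring
    linarith only [hPn, hRZX, hcast, hval, hhalf]
  have hN1D : RN ≤ RN1*(8*Ln) :=
    (div_le_iff₀ (by linarith only [hLn1] : (0:ℝ) < 8*Ln)).mp hN1_lb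
  have hN1X : RX ≤ RN1 := by
    have hval : RX ≤ RN/(8*Ln) := by
      rw [le_div_iff₀ (by linarith only [hLn1] : (0:ℝ) < 8*Ln)]
      linarith only [hLnRX]
    linarith only [hval, hN1_lb]
  have hRN1n : RN1 ≤ RN := by
    rw [hRN1def, hRNdef]
    have hle : N1 ≤ n := by
      rw [hN1def]
      calc (II X n).card ≤ (Finset.Ioc X n).card := Finset.card_filter_le _ _
        _ = n - X := Nat.card_Ioc X n
        _ ≤ n := by omega
    exact_mod_cast hle
  have hZ2 : (2:ℝ) ≤ RZ := by
    have h1 : RX/(8*s) ≤ RX/(4*L) :=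
      div_le_div_of_nonneg_left hRX0.le (by linarith only [hL1])
        (by linarith only [hL2s])
    have h2 : RX/(8*s) = s/8 := by
      rw [← hss]
      rw [show s*s/(8*s) = s*(s/(8*s)) by ring]
      rw [show s/(8*s) = 1/8 by
        rw [div_eq_iff (by linarith only [hs0] : (8:ℝ)*s ≠ 0)]; ring]
      ring
    have h3 : (2:ℝ) ≤ s/8 := by linarith only [hs15]
    linarith only [h1, h2, h3, hZ_lb]
  have hZnat2 : 2 ≤ Z := by
    rw [hRZdef] at hZ2; exact_mod_cast hZ2
  -- the cardinality m
  obtain ⟨m, hmdef⟩ : ∃ z : ℕ, z = (AA X n).card := ⟨_, rfl⟩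
  have hmcard : m = N1 * (Z*Z - Z) := by rw [hmdef, AA_card, hN1def, hZdef]
  have hZZ : Z ≤ Z*Z := Nat.le_mul_of_pos_left Z (by omega)
  set Rm : ℝ := (m:ℝ) with hRmdef
  have hRmval : Rm = RN1 * (RZ*RZ - RZ) := by
    rw [hRmdef, hmcard, hRN1def, hRZdef]
    push_cast [Nat.cast_sub hZZ]
    ring
  have hm_lb' : RN1*(RZ*RZ)/2 ≤ Rm := by
    rw [hRmval]
    have h := mul_nonneg hRN10 (mul_nonneg hRZ0 (show (0:ℝ) ≤ RZ - 2 by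
      linarith only [hZ2]))
    nlinarith only [h]
  have hm_ub : Rm ≤ RN * (RX*RX) := by
    rw [hRmval]
    have hZZ2 : RZ*RZ - RZ ≤ RX*RX := by
      have h := mul_le_mul hRZX hRZX hRZ0 (le_trans hRZ0 hRZX)
      linarith only [h, hRZ0]
    have hnn : (0:ℝ) ≤ RZ*RZ - RZ := by nlinarith only [hZ2, hRZ0]
    exact mul_le_mul hRN1n hZZ2 hnn hRN0.le
  have t1 : RN*(RX*RX) ≤ (RN1*(8*Ln))*((RZ*(4*L))*(RZ*(4*L))) := by
    have hZ4L0 : (0:ℝ) ≤ RZ*(4*L) := mul_nonneg hRZ0 (by linarith only [hL1])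
    apply mul_le_mul hN1D
    · exact mul_le_mul hZD hZD hRX0.le hZ4L0
    · positivity
    · exact mul_nonneg hRN10 (by linarith only [hLn1])
  have hLnLL0 : (0:ℝ) ≤ Ln*(L*L) := mul_nonneg hLn0 (mul_nonneg hL0 hL0)
  have hRm0' : (0:ℝ) ≤ Rm := by rw [hRmdef]; positivity
  have hm_low : RN*(RX*RX) ≤ Rm * (256*Ln*(L*L)) := by
    have t2 : (RN1*(8*Ln))*((RZ*(4*L))*(RZ*(4*L)))
        = (RN1*(RZ*RZ)/2) * (256*Ln*(L*L)) := by ring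
    have t3 : (RN1*(RZ*RZ)/2) * (256*Ln*(L*L)) ≤ Rm * (256*Ln*(L*L)) := by
      apply mul_le_mul_of_nonneg_right hm_lb'
      linarith only [hLnLL0]
    linarith only [t1, t2.le, t2.ge, t3]
  have hBsmall : 256*Ln*(L*L) ≤ RX*RX := by
    have h1 : (0:ℝ) ≤ s - 10240 := by linarith only [hs15]
    have h2 : (0:ℝ) ≤ s*s*s := by positivity
    have h3 : L*L ≤ (2*s)*(2*s) :=
      mul_le_mul hL2s hL2s hL0 (by linarith only [hs0])
    have h4 : Ln*(L*L) ≤ (10*s)*((2*s)*(2*s)) :=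
      mul_le_mul hLn10s h3 (mul_nonneg hL0 hL0) (by linarith only [hs0])
    have h5 : 256*(Ln*(L*L)) ≤ 256*((10*s)*((2*s)*(2*s))) := by
      linarith only [h4]
    have h6 : (256:ℝ)*((10*s)*((2*s)*(2*s))) = 10240*(s*s*s) := by ring
    have h7 : 10240*(s*s*s) ≤ s*(s*s*s) := by nlinarith only [mul_nonneg h1 h2]
    have h8 : s*(s*s*s) = RX*RX := by
      rw [show s*(s*s*s) = (s*s)*(s*s) by ring, hss]
    linarith only [h5, h6.le, h6.ge, h7, h8.le, h8.ge]
  have hm_n : RN ≤ Rm := by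
    have h1 : RN*(RX*RX) ≤ Rm*(RX*RX) := by
      calc RN*(RX*RX) ≤ Rm * (256*Ln*(L*L)) := hm_low
        _ ≤ Rm*(RX*RX) := mul_le_mul_of_nonneg_left hBsmall hRm0'
    exact le_of_mul_le_mul_right h1 (by positivity)
  have hRm0 : (0:ℝ) < Rm := lt_of_lt_of_le hRN0 hm_n
  have hRm1 : (1:ℝ) ≤ Rm := le_trans hRN1' hm_n
  set lm : ℝ := Real.log Rm with hlmdef
  have hlm1 : 1 ≤ lm := by
    rw [hlmdef, Real.le_log_iff_exp_le hRm0]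
    calc Real.exp 1 ≤ 2.7182818286 := (Real.exp_one_lt_d9).le
      _ ≤ (2:ℝ)^(30:ℕ) := by norm_num
      _ ≤ RX := hRX30
      _ ≤ RN := hRXRN
      _ ≤ Rm := hm_n
  have hlm0 : (0:ℝ) ≤ lm := by linarith only [hlm1]
  have hLn_lm : Ln ≤ lm := by
    rw [hlmdef, hLndef]
    exact Real.log_le_log hRN0 hm_n
  have hL_lm : L ≤ lm := by
    rw [hlmdef, hLdef]
    exact Real.log_le_log hRX0 (le_trans hRXRN hm_n)
  have hlm6 : lm ^ (6:ℝ) = lm^(6:ℕ) := by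
    rw [show (6:ℝ) = ((6:ℕ):ℝ) by norm_num, Real.rpow_natCast]
  have hlm6pos : (0:ℝ) < lm ^ (6:ℝ) := by
    rw [hlm6]
    exact pow_pos (by linarith only [hlm1]) 6
  have hlm6ge : lm ≤ lm^(6:ℝ) := by
    calc lm = lm^(1:ℝ) := (Real.rpow_one lm).symm
      _ ≤ lm^(6:ℝ) := Real.rpow_le_rpow_of_exponent_le hlm1 (by norm_num)
  -- final witnesses
  refine ⟨m, ?_, AA X n, GG X n, hmdef.symm, fun a b h => adj_mem h, ?_, ?_⟩
  · -- m₀ ≤ m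
    have h2 : n ≤ m := by
      rw [hRNdef, hRmdef] at hm_n
      exact_mod_cast hm_n
    omega
  · -- edge count lower bound
    have hE : ((N1 * N1 * (halfPairs X).card : ℕ) : ℝ) ≤ ((GG X n).edgeSet.ncard : ℝ) := by
      have h := edge_lower (X := X) (n := n)
      rw [← hN1def] at h
      exact_mod_cast h
    have hHPc : ((halfPairs X).card : ℝ) = (RZ*RZ - RZ)/2 := by
      have h := halfPairs_card (X := X)
      rw [← hZdef] at h
      have hcast2 : ((Z*Z - Z : ℕ) : ℝ) = (Z:ℝ)*(Z:ℝ) - (Z:ℝ) := by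
        push_cast [Nat.cast_sub hZZ]; ring
      have hcast : 2 * ((halfPairs X).card : ℝ) = RZ*RZ - RZ := by
        rw [hRZdef, ← hcast2]
        exact_mod_cast congrArg (fun t : ℕ => (t:ℝ)) h
      linarith only [hcast]
    have hEreal : Rm * RN1 / 2 ≤ ((GG X n).edgeSet.ncard : ℝ) := by
      have h1 : ((N1 * N1 * (halfPairs X).card : ℕ) : ℝ)
          = RN1*RN1*((RZ*RZ - RZ)/2) := by
        push_cast [hHPc]
        rw [hRN1def]
      have h2 : Rm * RN1/2 = RN1*RN1*((RZ*RZ - RZ)/2) := by rw [hRmval]; ring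
      rw [h2, ← h1]
      exact hE
    have hc35 : Rm^((3+2*α)/5) ≤ 16*lm*RN1 := by
      have hXθ2 : RX^(θ+2) = RX^θ * (RX*RX) := by
        rw [Real.rpow_add hRX0, show RX^(2:ℝ) = RX^(2:ℕ) by
          rw [show (2:ℝ) = ((2:ℕ):ℝ) by norm_num, Real.rpow_natCast]]
        ring
      have hub2 : Rm ≤ 2*RX^(θ+2) := by
        have h2 : RN*(RX*RX) ≤ (2*RX^θ)*(RX*RX) :=
          mul_le_mul_of_nonneg_right hn_ub (by positivity)
        rw [hXθ2]
        calc Rm ≤ RN*(RX*RX) := hm_ub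
          _ ≤ (2*RX^θ)*(RX*RX) := h2
          _ = 2*(RX^θ*(RX*RX)) := by ring
      have hc0 : (0:ℝ) ≤ (3+2*α)/5 := by linarith
      have hc1 : (3+2*α)/5 ≤ 1 := by linarith
      calc Rm^((3+2*α)/5) ≤ (2*RX^(θ+2))^((3+2*α)/5) :=
            Real.rpow_le_rpow hRm0.le hub2 hc0
        _ = 2^((3+2*α)/5) * (RX^(θ+2))^((3+2*α)/5) :=
            Real.mul_rpow (by norm_num) (by positivity)
        _ ≤ 2 * RX^θ := by
            have ha : (2:ℝ)^((3+2*α)/5) ≤ 2 := by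
              calc (2:ℝ)^((3+2*α)/5) ≤ (2:ℝ)^(1:ℝ) :=
                    Real.rpow_le_rpow_of_exponent_le one_le_two hc1
                _ = 2 := Real.rpow_one 2
            have hb : (RX^(θ+2))^((3+2*α)/5) = RX^θ := by
              rw [← Real.rpow_mul hRX0.le, hexp1]
            rw [hb]
            exact mul_le_mul_of_nonneg_right ha (by positivity)
        _ ≤ 2*RN := by linarith only [hn_lb]
        _ ≤ 2*(RN1*(8*Ln)) := by linarith only [hN1D]
        _ = 16*Ln*RN1 := by ring
        _ ≤ 16*lm*RN1 := by
            have := mul_le_mul_of_nonneg_right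
              (show 16*Ln ≤ 16*lm by linarith only [hLn_lm]) hRN10
            linarith only [this]
    have hpow : Rm^((8+2*α)/5) = Rm * Rm^((3+2*α)/5) := by
      rw [show (8+2*α)/5 = 1 + (3+2*α)/5 by ring, Real.rpow_add hRm0, Real.rpow_one]
    rw [div_le_iff₀ (by positivity : (0:ℝ) < 2^30 * lm^(6:ℝ))]
    have hnc : (0:ℝ) ≤ ((GG X n).edgeSet.ncard : ℝ) := by positivity
    calc Rm^((8+2*α)/5) = Rm * Rm^((3+2*α)/5) := hpow
      _ ≤ Rm * (16*lm*RN1) := mul_le_mul_of_nonneg_left hc35 hRm0.le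
      _ = 32*lm*(Rm*RN1/2) := by ring
      _ ≤ 32*lm*((GG X n).edgeSet.ncard : ℝ) := by
          apply mul_le_mul_of_nonneg_left hEreal
          have : (0:ℝ) ≤ 32*lm := by linarith only [hlm0]
          linarith only [this]
      _ ≤ ((GG X n).edgeSet.ncard : ℝ) * (2^30 * lm^(6:ℝ)) := by
          have h1 : 32*lm ≤ 2^30 * lm^(6:ℝ) := by
            have h2 : 32*lm ≤ 32*lm^(6:ℝ) := by linarith only [hlm6ge, hlm1]
            have h3 : 32*lm^(6:ℝ) ≤ 2^30*lm^(6:ℝ) := by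
              have := hlm6pos
              nlinarith only [this]
            linarith only [h2, h3]
          have := mul_le_mul_of_nonneg_right h1 hnc
          calc 32*lm*((GG X n).edgeSet.ncard : ℝ)
              ≤ 2^30 * lm^(6:ℝ) * ((GG X n).edgeSet.ncard : ℝ) := this
            _ = ((GG X n).edgeSet.ncard : ℝ) * (2^30 * lm^(6:ℝ)) := by ring
  · -- sums and products upper bound
    have hs1 : ((sumsAlong (GG X n)).ncard : ℝ)
        ≤ ((n*X+n*X+1 : ℕ) : ℝ) * ((Z*Z : ℕ) : ℝ) := by
      have h := sums_upper (X := X) (n := n)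
      rw [← hZdef] at h
      exact_mod_cast h
    have hp1 : ((prodsAlong (GG X n)).ncard : ℝ) ≤ ((n*n+1 : ℕ) : ℝ) := by
      exact_mod_cast prods_upper (X := X) (n := n)
    have hsum_bound : ((sumsAlong (GG X n)).ncard : ℝ) ≤ 3*(RN*RN) := by
      have hb1 : ((n*X+n*X+1 : ℕ) : ℝ) = RN*RX + RN*RX + 1 := by
        rw [hRNdef, hRXdef]; push_cast; ring
      have hb2 : ((Z*Z : ℕ) : ℝ) = RZ*RZ := by
        rw [hRZdef]; push_cast; ring
      have h1RNRX : (1:ℝ) ≤ RN*RX := by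
        have := mul_le_mul hRN1' hRX1 (by norm_num) (by linarith only [hRN1'])
        linarith only [this]
      have hb3 : ((n*X+n*X+1 : ℕ) : ℝ) ≤ 3*(RN*RX) := by
        rw [hb1]; linarith only [h1RNRX]
      have hb4 : RZ*RZ ≤ RX*RX := mul_le_mul hRZX hRZX hRZ0 (le_trans hRZ0 hRZX)
      have hb5 : ((n*X+n*X+1 : ℕ) : ℝ) * ((Z*Z : ℕ) : ℝ) ≤ (3*(RN*RX))*(RX*RX) := by
        rw [hb2]
        apply mul_le_mul hb3 hb4 (mul_nonneg hRZ0 hRZ0) (by positivity)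
      have hb6 : (3*(RN*RX))*(RX*RX) = 3*RN*(RX*RX*RX) := by ring
      have hb7 : 3*RN*(RX*RX*RX) ≤ 3*RN*RN := by
        apply mul_le_mul_of_nonneg_left hRX3RN (by positivity)
      calc ((sumsAlong (GG X n)).ncard : ℝ)
          ≤ ((n*X+n*X+1 : ℕ) : ℝ) * ((Z*Z : ℕ) : ℝ) := hs1
        _ ≤ (3*(RN*RX))*(RX*RX) := hb5
        _ = 3*RN*(RX*RX*RX) := hb6
        _ ≤ 3*RN*RN := hb7
        _ = 3*(RN*RN) := by ring
    have hprod_bound : ((prodsAlong (GG X n)).ncard : ℝ) ≤ 2*(RN*RN) := by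
      have hb1 : ((n*n+1 : ℕ) : ℝ) = RN*RN + 1 := by
        rw [hRNdef]; push_cast; ring
      have hb2 : (1:ℝ) ≤ RN*RN := by
        have := mul_le_mul hRN1' hRN1' (by norm_num) (by linarith only [hRN1'])
        linarith only [this]
      linarith only [hp1, hb1.le, hb1.ge, hb2]
    have hRN2 : RN*RN ≤ 4*RX^(2*θ) := by
      have h1 : RX^(2*θ) = RX^θ * RX^θ := by
        rw [two_mul, Real.rpow_add hRX0]
      have h2 : RN*RN ≤ (2*RX^θ)*(2*RX^θ) :=
        mul_le_mul hn_ub hn_ub hRN0.le (by positivity)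
      rw [h1]
      linarith only [h2]
    have hB1 : (1:ℝ) ≤ 256*Ln*(L*L) := by nlinarith only [hLn1, hL1]
    have hkey : RX^(2*θ) ≤ Rm^((6+4*α)/5) * (256*Ln*(L*L))^(2:ℕ) := by
      have hc0 : (0:ℝ) ≤ (6+4*α)/5 := by linarith
      have hc2 : (6+4*α)/5 ≤ 2 := by linarith
      have hXθ2 : RX^(θ+2) = RX^θ * (RX*RX) := by
        rw [Real.rpow_add hRX0, show RX^(2:ℝ) = RX^(2:ℕ) by
          rw [show (2:ℝ) = ((2:ℕ):ℝ) by norm_num, Real.rpow_natCast]]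
        ring
      have hXθ2le : RX^(θ+2) ≤ Rm * (256*Ln*(L*L)) := by
        rw [hXθ2]
        calc RX^θ * (RX*RX) ≤ RN * (RX*RX) :=
              mul_le_mul_of_nonneg_right hn_lb (by positivity)
          _ ≤ Rm * (256*Ln*(L*L)) := hm_low
      calc RX^(2*θ) = RX^((θ+2)*((6+4*α)/5)) := by rw [hexp2]
        _ = (RX^(θ+2))^((6+4*α)/5) := Real.rpow_mul hRX0.le _ _
        _ ≤ (Rm * (256*Ln*(L*L)))^((6+4*α)/5) :=
            Real.rpow_le_rpow (by positivity) hXθ2le hc0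
        _ = Rm^((6+4*α)/5) * (256*Ln*(L*L))^((6+4*α)/5) :=
            Real.mul_rpow hRm0.le (by linarith only [hB1])
        _ ≤ Rm^((6+4*α)/5) * (256*Ln*(L*L))^(2:ℕ) := by
            apply mul_le_mul_of_nonneg_left _ (by positivity)
            calc (256*Ln*(L*L))^((6+4*α)/5) ≤ (256*Ln*(L*L))^(2:ℝ) :=
                  Real.rpow_le_rpow_of_exponent_le hB1 hc2
              _ = (256*Ln*(L*L))^(2:ℕ) := by
                  rw [show (2:ℝ) = ((2:ℕ):ℝ) by norm_num, Real.rpow_natCast]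
    have hB2lm : (256*Ln*(L*L))^(2:ℕ) ≤ 2^16 * lm^(6:ℕ) := by
      have h1 : 256*Ln*(L*L) ≤ 256*(lm*(lm*lm)) := by
        have hin : L*L ≤ lm*lm := mul_le_mul hL_lm hL_lm hL0 hlm0
        have hin2 : Ln*(L*L) ≤ lm*(lm*lm) :=
          mul_le_mul hLn_lm hin (mul_nonneg hL0 hL0) hlm0
        linarith only [hin2]
      calc (256*Ln*(L*L))^(2:ℕ) ≤ (256*(lm*(lm*lm)))^(2:ℕ) :=
            pow_le_pow_left₀ (by linarith only [hB1]) h1 2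
        _ = 2^16 * lm^(6:ℕ) := by ring
    have hRm60 : (0:ℝ) ≤ Rm^((6+4*α)/5) := by positivity
    have hc : ((sumsAlong (GG X n)).ncard : ℝ) + ((prodsAlong (GG X n)).ncard : ℝ)
        ≤ 5*(RN*RN) := by linarith only [hsum_bound, hprod_bound]
    calc ((sumsAlong (GG X n)).ncard : ℝ) + ((prodsAlong (GG X n)).ncard : ℝ)
        ≤ 5*(RN*RN) := hc
      _ ≤ 20*RX^(2*θ) := by linarith only [hRN2]
      _ ≤ 20*(Rm^((6+4*α)/5) * (256*Ln*(L*L))^(2:ℕ)) := by linarith only [hkey]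
      _ ≤ 20*(Rm^((6+4*α)/5) * (2^16 * lm^(6:ℕ))) := by
          have := mul_le_mul_of_nonneg_left hB2lm hRm60
          linarith only [this]
      _ ≤ 2^30 * Rm^((6+4*α)/5) * lm^(6:ℝ) := by
          rw [hlm6]
          have hlm60 : (0:ℝ) ≤ lm^(6:ℕ) := by positivity
          have hfin := mul_nonneg hRm60 hlm60
          nlinarith only [hfin]
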